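/- Let Z be a countable abelian subgroup of Homeo₊(ℝ) which acts freely on ℝ (every nonidentity element has no fixed point) and whose action is minimal (every Z-orbit is dense in ℝ). Then Z is topologically conjugate to a group of translations: there exists h ∈ Homeo₊(ℝ) such that for every ζ ∈ Z the map h ∘ ζ ∘ h⁻¹ is a translation x ↦ x + c for some c ∈ ℝ. -/

import Mathlib

open Set Filter Topology

section AuxLemmas

variable {Z : Subgroup (Equiv.Perm ℝ)}

/-- A strictly monotone bijection of `ℝ` is continuous. -/
private lemma aux_cont (hmono : ∀ ζ ∈ Z, StrictMono ⇑ζ) {ζ : Equiv.Perm ℝ} (hζ : ζ ∈ Z) :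
    Continuous ⇑ζ :=
  (StrictMono.orderIsoOfSurjective ⇑ζ (hmono ζ hζ) ζ.surjective).continuous

/-- If a fixed-point-free strictly monotone permutation moves some point up,
it moves every point up. -/
private lemma aux_lt_all (hmono : ∀ ζ ∈ Z, StrictMono ⇑ζ)
    (hfree : ∀ ζ ∈ Z, ζ ≠ 1 → ∀ x : ℝ, ζ x ≠ x)
    {ζ : Equiv.Perm ℝ} (hζ : ζ ∈ Z) {a : ℝ} (ha : a < ζ a) (x : ℝ) : x < ζ x := by
  have hζ1 : ζ ≠ 1 := by
    rintro rfl
    simp at ha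
  rcases lt_trichotomy x (ζ x) with h | h | h
  · exact h
  · exact absurd h.symm (hfree ζ hζ hζ1 x)
  · exfalso
    have hcont : Continuous fun y : ℝ => ζ y - y := (aux_cont hmono hζ).sub continuous_id
    have h0 : (0 : ℝ) ∈ uIcc (ζ x - x) (ζ a - a) := by
      rw [Set.mem_uIcc]
      left
      constructor <;> linarith
    obtain ⟨z, _, hz⟩ := intermediate_value_uIcc hcont.continuousOn h0
    exact hfree ζ hζ hζ1 z (by dsimp at hz; linarith)

private lemma aux_eq_of_eq_at_zero (hfree : ∀ ζ ∈ Z, ζ ≠ 1 → ∀ x : ℝ, ζ x ≠ x)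
    {ζ η : Equiv.Perm ℝ} (hζ : ζ ∈ Z) (hη : η ∈ Z) (h : ζ 0 = η 0) : ζ = η := by
  by_contra hne
  have hδZ : ζ⁻¹ * η ∈ Z := Z.mul_mem (Z.inv_mem hζ) hη
  have hδ1 : ζ⁻¹ * η ≠ 1 := by
    intro h1
    exact hne (inv_mul_eq_one.mp h1)
  refine hfree _ hδZ hδ1 0 ?_
  simp [Equiv.Perm.mul_apply, ← h]

/-- Orbits of points under an everywhere-increasing element are unbounded above. -/
private lemma aux_unbounded (hmono : ∀ ζ ∈ Z, StrictMono ⇑ζ)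
    (hfree : ∀ ζ ∈ Z, ζ ≠ 1 → ∀ x : ℝ, ζ x ≠ x)
    {ζ : Equiv.Perm ℝ} (hζ : ζ ∈ Z) (h0 : 0 < ζ 0) (B : ℝ) :
    ∃ n : ℕ, B ≤ (ζ ^ n) 0 := by
  by_contra hB
  push_neg at hB
  set u : ℕ → ℝ := fun n => (ζ ^ n) 0 with hu
  have hlt : ∀ x, x < ζ x := aux_lt_all hmono hfree hζ (show (0:ℝ) < ζ 0 from h0)
  have hsucc : ∀ n, u (n + 1) = ζ (u n) := by
    intro n
    simp [hu, pow_succ', Equiv.Perm.mul_apply]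
  have hmonou : Monotone u := monotone_nat_of_le_succ fun n => by
    rw [hsucc]; exact (hlt (u n)).le
  have hbdd : BddAbove (Set.range u) := ⟨B, by rintro _ ⟨n, rfl⟩; exact (hB n).le⟩
  have htend := tendsto_atTop_ciSup hmonou hbdd
  set L := ⨆ n, u n with hL
  have h2 : Tendsto (fun n => u (n + 1)) atTop (𝓝 L) := htend.comp (tendsto_add_atTop_nat 1)
  have h3 : Tendsto (fun n => ζ (u n)) atTop (𝓝 (ζ L)) :=
    ((aux_cont hmono hζ).tendsto L).comp htend
  have h3' : Tendsto (fun n => u (n + 1)) atTop (𝓝 (ζ L)) := by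
    simp only [hsucc]; exact h3
  exact (hlt L).ne' (tendsto_nhds_unique h3' h2)

end AuxLemmas

/-- **Hölder's theorem**: an archimedean linearly ordered commutative group admits a
strictly monotone additive character to `ℝ`. -/
private theorem holder_embedding {G : Type*} [CommGroup G] [LinearOrder G] [IsOrderedMonoid G] [MulArchimedean G]
    {f : G} (hf : 1 < f) :
    ∃ τ : G → ℝ, (∀ g h : G, τ (g * h) = τ g + τ h) ∧ ∀ g h : G, g < h → τ g < τ h := by
  classical
  set S : G → Set ℝ := fun g => {x | ∃ p : ℤ, ∃ q : ℕ, 0 < q ∧ f ^ p ≤ g ^ (q : ℤ) ∧ x = p / q}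
    with hS
  have hne : ∀ g, (S g).Nonempty := by
    intro g
    obtain ⟨n, hn⟩ := MulArchimedean.arch g⁻¹ hf
    refine ⟨((-(n:ℤ) : ℤ) : ℝ) / ((1:ℕ) : ℝ), -(n:ℤ), 1, one_pos, ?_, rfl⟩
    have h1 : (f ^ ((n:ℕ) : ℤ))⁻¹ ≤ g := by
      calc (f ^ ((n:ℕ) : ℤ))⁻¹ ≤ (g⁻¹)⁻¹ := inv_le_inv' (by rw [zpow_natCast]; exact hn)
        _ = g := inv_inv g
    rw [← zpow_neg] at h1
    simpa using h1
  have hbddlem : ∀ (g : G) (N : ℕ), g ≤ f ^ N → ∀ x ∈ S g, x ≤ (N : ℝ) := by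
    rintro g N hN x ⟨p, q, hq, hpq, rfl⟩
    have h1 : g ^ (q:ℤ) ≤ f ^ ((N : ℤ) * q) := by
      calc g ^ (q:ℤ) = g ^ q := zpow_natCast g q
        _ ≤ (f ^ N) ^ q := pow_le_pow_left' hN q
        _ = f ^ (N * q) := (pow_mul f N q).symm
        _ = f ^ (((N * q : ℕ)) : ℤ) := (zpow_natCast _ _).symm
        _ = f ^ ((N : ℤ) * q) := by norm_cast
    have h2 : p ≤ (N : ℤ) * q := (zpow_le_zpow_iff_right hf).mp (hpq.trans h1)
    have hq' : (0:ℝ) < (q:ℝ) := by exact_mod_cast hq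
    rw [div_le_iff₀ hq']
    exact_mod_cast h2
  have hbdd : ∀ g, BddAbove (S g) := by
    intro g
    obtain ⟨N, hN⟩ := MulArchimedean.arch g hf
    exact ⟨N, fun x hx => hbddlem g N hN x hx⟩
  set τ : G → ℝ := fun g => sSup (S g) with hτ
  have hlow : ∀ (g : G) (p : ℤ) (q : ℕ), 0 < q → f ^ p ≤ g ^ (q:ℤ) → (p:ℝ) / q ≤ τ g :=
    fun g p q hq h => le_csSup (hbdd g) ⟨p, q, hq, h, rfl⟩
  have hhigh : ∀ (g : G) (p : ℤ) (q : ℕ), 0 < q → g ^ (q:ℤ) ≤ f ^ p → τ g ≤ (p:ℝ) / q := by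
    intro g p q hq h
    refine csSup_le (hne g) ?_
    rintro x ⟨p', q', hq', hp', rfl⟩
    have e1 : f ^ (p' * (q:ℤ)) = (f ^ p') ^ q := by
      rw [zpow_mul, zpow_natCast]
    have e2 : (g ^ ((q':ℕ):ℤ)) ^ q = (g ^ ((q:ℕ):ℤ)) ^ q' := by
      rw [← zpow_natCast (g ^ ((q':ℕ):ℤ)) q, ← zpow_natCast (g ^ ((q:ℕ):ℤ)) q', ← zpow_mul,
        ← zpow_mul, mul_comm]
    have e3 : (f ^ p) ^ q' = f ^ (p * (q':ℤ)) := by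
      rw [zpow_mul, zpow_natCast]
    have h1 : f ^ (p' * (q:ℤ)) ≤ f ^ (p * (q':ℤ)) := by
      calc f ^ (p' * (q:ℤ)) = (f ^ p') ^ q := e1
        _ ≤ (g ^ ((q':ℕ):ℤ)) ^ q := pow_le_pow_left' hp' q
        _ = (g ^ ((q:ℕ):ℤ)) ^ q' := e2
        _ ≤ (f ^ p) ^ q' := pow_le_pow_left' h q'
        _ = f ^ (p * (q':ℤ)) := e3
    have h2 : p' * (q:ℤ) ≤ p * (q':ℤ) := (zpow_le_zpow_iff_right hf).mp h1
    have hq0 : (0:ℝ) < q := by exact_mod_cast hq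
    have hq'0 : (0:ℝ) < q' := by exact_mod_cast hq'
    rw [div_le_div_iff₀ hq'0 hq0]
    exact_mod_cast h2
  have hbracket : ∀ (g : G) (q : ℕ), 0 < q →
      ∃ p : ℤ, f ^ p ≤ g ^ (q:ℤ) ∧ g ^ (q:ℤ) < f ^ (p+1) ∧
        (p:ℝ)/q ≤ τ g ∧ τ g ≤ ((p:ℝ)+1)/q := by
    intro g q hq
    obtain ⟨p, ⟨h1, h2⟩, -⟩ := existsUnique_zpow_near_of_one_lt hf (g ^ (q:ℤ))
    refine ⟨p, h1, h2, hlow g p q hq h1, ?_⟩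
    have := hhigh g (p+1) q hq h2.le
    push_cast at this
    exact this
  have hhom : ∀ g h : G, τ (g * h) = τ g + τ h := by
    intro g h
    have key : ∀ q : ℕ, 0 < q → |τ (g * h) - (τ g + τ h)| ≤ 2 / q := by
      intro q hq
      obtain ⟨p₁, hg1, hg2, hg3, hg4⟩ := hbracket g q hq
      obtain ⟨p₂, hh1, hh2, hh3, hh4⟩ := hbracket h q hq
      have hm1 : f ^ (p₁ + p₂) ≤ (g * h) ^ (q:ℤ) := by
        rw [mul_zpow, zpow_add]
        exact mul_le_mul' hg1 hh1
      have hm2 : (g * h) ^ (q:ℤ) ≤ f ^ (p₁ + p₂ + 2) := by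
        rw [mul_zpow]
        calc g ^ (q:ℤ) * h ^ (q:ℤ) ≤ f ^ (p₁+1) * f ^ (p₂+1) := mul_le_mul' hg2.le hh2.le
          _ = f ^ (p₁ + p₂ + 2) := by rw [← zpow_add]; ring_nf
      have l1 := hlow (g*h) (p₁+p₂) q hq hm1
      have l2 := hhigh (g*h) (p₁+p₂+2) q hq hm2
      have hq0 : (0:ℝ) < q := by exact_mod_cast hq
      push_cast at l1 l2
      rw [abs_sub_le_iff]
      have m1 := (div_le_iff₀ hq0).mp l1
      have m2 := (le_div_iff₀ hq0).mp l2
      have m3 := (div_le_iff₀ hq0).mp hg3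
      have m4 := (le_div_iff₀ hq0).mp hg4
      have m5 := (div_le_iff₀ hq0).mp hh3
      have m6 := (le_div_iff₀ hq0).mp hh4
      constructor <;> rw [le_div_iff₀ hq0] <;> nlinarith
    by_contra hne'
    have hD : 0 < |τ (g * h) - (τ g + τ h)| := abs_pos.mpr (sub_ne_zero.mpr hne')
    obtain ⟨q, hq⟩ := exists_nat_gt (2 / |τ (g * h) - (τ g + τ h)|)
    have hq0 : 0 < q := by
      have h1 : (0:ℝ) < 2 / |τ (g * h) - (τ g + τ h)| := by positivity
      exact_mod_cast h1.trans hq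
    have hkey := key q hq0
    have hlt2 : 2 / (q:ℝ) < |τ (g * h) - (τ g + τ h)| := by
      rw [div_lt_iff₀ (by exact_mod_cast hq0 : (0:ℝ) < q)]
      rw [div_lt_iff₀ hD] at hq
      nlinarith
    linarith
  have hmonoτ : ∀ g h : G, g < h → τ g < τ h := by
    intro g h hgh
    have hd : 1 < h / g := one_lt_div'.mpr hgh
    obtain ⟨n, hn⟩ := MulArchimedean.arch f hd
    have hn0 : 0 < n := by
      rcases Nat.eq_zero_or_pos n with rfl | h'
      · rw [pow_zero] at hn; exact absurd hn (not_le.mpr hf)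
      · exact h'
    have hτd : 0 < τ (h / g) := by
      have hl := hlow (h / g) 1 n hn0 (by rw [zpow_one, zpow_natCast]; exact hn)
      push_cast at hl
      have hn0' : (0:ℝ) < n := by exact_mod_cast hn0
      calc (0:ℝ) < 1 / n := by positivity
        _ ≤ τ (h / g) := hl
    have hmul : g * (h / g) = h := by
      rw [div_eq_mul_inv, mul_comm h g⁻¹, ← mul_assoc, mul_inv_cancel, one_mul]
    have := hhom g (h / g)
    rw [hmul] at this
    linarith
  exact ⟨τ, hhom, hmonoτ⟩

/-- A countable abelian subgroup `Z` of `Homeo₊(ℝ)` (encoded as a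
subgroup of `Equiv.Perm ℝ` all of whose elements are strictly monotone) acting freely and
minimally on `ℝ` is topologically conjugate to a group of translations: there is an
orientation-preserving homeomorphism `h` of `ℝ` such that each `h ∘ ζ ∘ h⁻¹`, `ζ ∈ Z`,
is a translation `x ↦ x + c`. -/
theorem free_minimal_abelian_group_conjugate_to_translations
    (Z : Subgroup (Equiv.Perm ℝ)) [Countable ↥Z]
    (hmono : ∀ ζ ∈ Z, StrictMono ⇑ζ)
    (habel : ∀ ζ ∈ Z, ∀ η ∈ Z, ζ * η = η * ζ)
    (hfree : ∀ ζ ∈ Z, ζ ≠ 1 → ∀ x : ℝ, ζ x ≠ x)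
    (hmin : ∀ x : ℝ, Dense {y : ℝ | ∃ ζ ∈ Z, ζ x = y}) :
    ∃ h : Equiv.Perm ℝ, StrictMono ⇑h ∧
      ∀ ζ ∈ Z, ∃ c : ℝ, ∀ x : ℝ, h (ζ (h.symm x)) = x + c := by
  classical
  have einj : Function.Injective (fun g : ↥Z => (g : Equiv.Perm ℝ) 0) := by
    intro a b hab
    exact Subtype.ext (aux_eq_of_eq_at_zero hfree a.2 b.2 hab)
  letI instL : LinearOrder ↥Z := LinearOrder.lift' (fun g : ↥Z => (g : Equiv.Perm ℝ) 0) einj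
  letI instC : CommGroup ↥Z :=
    { (inferInstance : Group ↥Z) with
      mul_comm := fun a b => Subtype.ext (habel a a.2 b b.2) }
  haveI instG : IsOrderedMonoid ↥Z :=
    { mul_le_mul_left := fun a b hab c => by
        rw [mul_comm a c, mul_comm b c]
        have h1 : (a : Equiv.Perm ℝ) 0 ≤ (b : Equiv.Perm ℝ) 0 := hab
        show ((c * a : ↥Z) : Equiv.Perm ℝ) 0 ≤ ((c * b : ↥Z) : Equiv.Perm ℝ) 0
        simp only [Subgroup.coe_mul, Equiv.Perm.mul_apply]
        exact (hmono c c.2).monotone h1 }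
  have hle : ∀ a b : ↥Z, a ≤ b ↔ (a : Equiv.Perm ℝ) 0 ≤ (b : Equiv.Perm ℝ) 0 :=
    fun _ _ => Iff.rfl
  have hlt : ∀ a b : ↥Z, a < b ↔ (a : Equiv.Perm ℝ) 0 < (b : Equiv.Perm ℝ) 0 :=
    fun _ _ => Iff.rfl
  haveI instArch : MulArchimedean ↥Z := by
    constructor
    intro x y hy
    have hy0 : (0:ℝ) < (y : Equiv.Perm ℝ) 0 := by
      have := (hlt 1 y).mp hy
      simpa using this
    obtain ⟨n, hn⟩ := aux_unbounded hmono hfree y.2 hy0 ((x : Equiv.Perm ℝ) 0)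
    refine ⟨n, (hle x (y ^ n)).mpr ?_⟩
    have hcoe : ((y ^ n : ↥Z) : Equiv.Perm ℝ) = (y : Equiv.Perm ℝ) ^ n :=
      SubmonoidClass.coe_pow y n
    rw [hcoe]
    exact hn
  -- an element above the identity
  have horb : ∀ a b : ℝ, a < b → ∃ g : ↥Z, (g : Equiv.Perm ℝ) 0 ∈ Set.Ioo a b := by
    intro a b hab
    obtain ⟨y, hy, hy2⟩ := (hmin 0).exists_mem_open isOpen_Ioo (nonempty_Ioo.mpr hab)
    obtain ⟨ζ, hζ, rfl⟩ := hy
    exact ⟨⟨ζ, hζ⟩, hy2⟩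
  obtain ⟨f, hf0⟩ : ∃ f : ↥Z, (0:ℝ) < (f : Equiv.Perm ℝ) 0 := by
    obtain ⟨g, hg⟩ := horb 0 1 one_pos
    exact ⟨g, hg.1⟩
  have hf : (1:↥Z) < f := by
    rw [hlt]
    simpa using hf0
  obtain ⟨τ, hhom, hstrict⟩ := holder_embedding (G := ↥Z) hf
  have hτ1 : τ 1 = 0 := by
    have := hhom 1 1
    rw [one_mul] at this
    linarith
  have hτmono : ∀ a b : ↥Z, a ≤ b → τ a ≤ τ b := by
    intro a b hab
    rcases hab.lt_or_eq with h | h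
    · exact (hstrict a b h).le
    · rw [h]
  have hτinv : ∀ g : ↥Z, τ g⁻¹ = - τ g := by
    intro g
    have := hhom g g⁻¹
    rw [mul_inv_cancel, hτ1] at this
    linarith
  -- the image of τ is a dense subgroup of ℝ
  set T : AddSubgroup ℝ :=
    { carrier := Set.range τ
      zero_mem' := ⟨1, hτ1⟩
      add_mem' := by rintro _ _ ⟨a, rfl⟩ ⟨b, rfl⟩; exact ⟨a * b, hhom a b⟩
      neg_mem' := by rintro _ ⟨a, rfl⟩; exact ⟨a⁻¹, hτinv a⟩ } with hTdef
  have hTd : Dense (T : Set ℝ) := by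
    rcases T.dense_or_cyclic with hd | ⟨a, ha⟩
    · exact hd
    · exfalso
      have hτf : τ f ∈ T := ⟨f, rfl⟩
      have hτfpos : 0 < τ f := hτ1 ▸ hstrict 1 f hf
      rcases eq_or_ne a 0 with rfl | ha0
      · rw [ha, AddSubgroup.closure_singleton_zero, AddSubgroup.mem_bot] at hτf
        linarith
      · have haT : a ∈ T := by rw [ha]; exact AddSubgroup.subset_closure rfl
        obtain ⟨g₀, hg₀⟩ := haT
        have key : ∀ g₁ : ↥Z, τ g₁ = |a| → False := by
          intro g₁ hg₁
          have habs : 0 < |a| := abs_pos.mpr ha0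
          have h1g : (1:↥Z) < g₁ := by
            rcases lt_trichotomy (1:↥Z) g₁ with h | h | h
            · exact h
            · exfalso; rw [← h, hτ1] at hg₁; exact (ne_of_gt habs) hg₁.symm
            · exfalso
              have := hstrict g₁ 1 h
              rw [hτ1, hg₁] at this
              linarith
          have h0g₁ : (0:ℝ) < (g₁ : Equiv.Perm ℝ) 0 := by
            have := (hlt 1 g₁).mp h1g
            simpa using this
          obtain ⟨g, hgI⟩ := horb 0 ((g₁ : Equiv.Perm ℝ) 0) h0g₁
          have h1ltg : (1:↥Z) < g := by rw [hlt]; simpa using hgI.1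
          have hgg₁ : g < g₁ := (hlt g g₁).mpr hgI.2
          have h0τ : 0 < τ g := hτ1 ▸ hstrict 1 g h1ltg
          have hττ : τ g < |a| := hg₁ ▸ hstrict g g₁ hgg₁
          have hmem : τ g ∈ T := ⟨g, rfl⟩
          rw [ha, AddSubgroup.mem_closure_singleton] at hmem
          obtain ⟨k, hk⟩ := hmem
          rw [zsmul_eq_mul] at hk
          have hk0 : k ≠ 0 := by rintro rfl; simp at hk; linarith
          have h1k : (1:ℝ) ≤ |(k:ℝ)| := by exact_mod_cast Int.one_le_abs hk0
          have habsmul : |(k:ℝ) * a| = |(k:ℝ)| * |a| := abs_mul _ _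
          rw [hk, abs_of_pos h0τ] at habsmul
          nlinarith
        rcases ha0.lt_or_gt with h | h
        · exact key g₀⁻¹ (by rw [hτinv, hg₀, abs_of_neg h])
        · exact key g₀ (by rw [hg₀, abs_of_pos h])
  have hdτ : ∀ a b : ℝ, a < b → ∃ g : ↥Z, τ g ∈ Set.Ioo a b := by
    intro a b hab
    obtain ⟨y, hy, hy2⟩ := hTd.exists_mem_open isOpen_Ioo (nonempty_Ioo.mpr hab)
    obtain ⟨g, rfl⟩ := hy
    exact ⟨g, hy2⟩
  -- the conjugating map
  set A : ℝ → Set ℝ := fun x => τ '' {g : ↥Z | (g : Equiv.Perm ℝ) 0 ≤ x} with hA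
  have hAne : ∀ x, (A x).Nonempty := by
    intro x
    obtain ⟨g, hg⟩ := horb (x - 1) x (by linarith)
    exact ⟨τ g, g, hg.2.le, rfl⟩
  have hAbdd : ∀ x, BddAbove (A x) := by
    intro x
    obtain ⟨g', hg'⟩ := horb x (x + 1) (by linarith)
    refine ⟨τ g', ?_⟩
    rintro _ ⟨g, hg, rfl⟩
    exact (hstrict g g' ((hlt g g').mpr (lt_of_le_of_lt hg hg'.1))).le
  set F : ℝ → ℝ := fun x => sSup (A x) with hF
  have heval : ∀ g : ↥Z, F ((g : Equiv.Perm ℝ) 0) = τ g := by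
    intro g
    apply le_antisymm
    · apply csSup_le (hAne _)
      rintro _ ⟨g', hg', rfl⟩
      exact hτmono g' g ((hle g' g).mpr hg')
    · exact le_csSup (hAbdd _)
        ⟨g, show (g : Equiv.Perm ℝ) 0 ≤ (g : Equiv.Perm ℝ) 0 from le_rfl, rfl⟩
  have hFmono : Monotone F := by
    intro x y hxy
    apply csSup_le_csSup (hAbdd y) (hAne x)
    rintro _ ⟨g, hg, rfl⟩
    exact ⟨g, hg.trans hxy, rfl⟩
  have hFstrict : StrictMono F := by
    intro x y hxy
    obtain ⟨g, hg⟩ := horb x y hxy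
    obtain ⟨g', hg'⟩ := horb ((g : Equiv.Perm ℝ) 0) y hg.2
    have h1 : F x ≤ τ g := by
      apply csSup_le (hAne x)
      rintro _ ⟨g'', hg'', rfl⟩
      exact (hstrict g'' g ((hlt _ _).mpr (lt_of_le_of_lt hg'' hg.1))).le
    have h2 : τ g < τ g' := hstrict g g' ((hlt _ _).mpr hg'.1)
    have h3 : τ g' ≤ F y := le_csSup (hAbdd y) ⟨g', hg'.2.le, rfl⟩
    linarith
  have hequiv : ∀ (g : ↥Z) (x : ℝ), F ((g : Equiv.Perm ℝ) x) = F x + τ g := by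
    intro g x
    have himg : A ((g : Equiv.Perm ℝ) x) = (fun v => v + τ g) '' A x := by
      ext t
      constructor
      · rintro ⟨ρ, hρ, rfl⟩
        refine ⟨τ (g⁻¹ * ρ), ⟨g⁻¹ * ρ, ?_, rfl⟩, ?_⟩
        · show ((g⁻¹ * ρ : ↥Z) : Equiv.Perm ℝ) 0 ≤ x
          have hc : ((g⁻¹ * ρ : ↥Z) : Equiv.Perm ℝ) 0
              = (g : Equiv.Perm ℝ)⁻¹ ((ρ : Equiv.Perm ℝ) 0) := by
            simp [Equiv.Perm.mul_apply]
          rw [hc, ← (hmono g g.2).le_iff_le]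
          simpa using hρ
        · have := hhom g (g⁻¹ * ρ)
          rw [← mul_assoc, mul_inv_cancel, one_mul] at this
          dsimp only
          linarith
      · rintro ⟨_, ⟨ρ, hρ, rfl⟩, rfl⟩
        refine ⟨g * ρ, ?_, by rw [hhom g ρ]; ring⟩
        show ((g * ρ : ↥Z) : Equiv.Perm ℝ) 0 ≤ (g : Equiv.Perm ℝ) x
        simp only [Subgroup.coe_mul, Equiv.Perm.mul_apply]
        exact (hmono g g.2).monotone hρ
    show sSup (A ((g : Equiv.Perm ℝ) x)) = sSup (A x) + τ g
    rw [himg]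
    have hmap := (OrderIso.addRight (τ g)).map_csSup' (hAne x) (hAbdd x)
    have hco : ⇑(OrderIso.addRight (τ g)) = fun v : ℝ => v + τ g := by
      funext v
      simp
    rw [hco] at hmap
    rw [← hmap]
  have hFsurj : Function.Surjective F := by
    intro y
    set A' : Set ℝ := {u : ℝ | F u ≤ y} with hA'
    have hA'ne : A'.Nonempty := by
      obtain ⟨g, hg⟩ := hdτ (y - 1) y (by linarith)
      refine ⟨(g : Equiv.Perm ℝ) 0, ?_⟩
      show F _ ≤ y
      rw [heval]
      exact hg.2.le
    have hA'bdd : BddAbove A' := by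
      obtain ⟨g', hg'⟩ := hdτ y (y + 1) (by linarith)
      refine ⟨(g' : Equiv.Perm ℝ) 0, ?_⟩
      intro u hu
      by_contra hc
      push_neg at hc
      have h1 : τ g' ≤ F u := by rw [← heval g']; exact hFmono hc.le
      have h2 : F u ≤ y := hu
      linarith [hg'.1]
    refine ⟨sSup A', le_antisymm ?_ ?_⟩
    · by_contra hc
      push_neg at hc
      obtain ⟨t, ⟨ξ, hξ, rfl⟩, hyt⟩ := exists_lt_of_lt_csSup (hAne (sSup A')) hc
      obtain ⟨ρ, hρ⟩ := hdτ y (τ ξ) hyt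
      have hub : ∀ u ∈ A', u ≤ (ρ : Equiv.Perm ℝ) 0 := by
        intro u hu
        by_contra hcc
        push_neg at hcc
        have h1 : τ ρ ≤ F u := by rw [← heval ρ]; exact hFmono hcc.le
        exact absurd (h1.trans hu) (not_le.mpr hρ.1)
      have hxle : sSup A' ≤ (ρ : Equiv.Perm ℝ) 0 := csSup_le hA'ne hub
      have hρξ : ρ < ξ := by
        by_contra hcc
        push_neg at hcc
        exact absurd (hτmono ξ ρ hcc) (not_le.mpr hρ.2)
      have hρξ0 : (ρ : Equiv.Perm ℝ) 0 < (ξ : Equiv.Perm ℝ) 0 := (hlt ρ ξ).mp hρξ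
      have : (ξ : Equiv.Perm ℝ) 0 ≤ sSup A' := hξ
      linarith
    · by_contra hc
      push_neg at hc
      obtain ⟨ρ, hρ⟩ := hdτ (F (sSup A')) y hc
      have hmem : (ρ : Equiv.Perm ℝ) 0 ∈ A' := by
        show F _ ≤ y
        rw [heval]
        exact hρ.2.le
      have h1 : (ρ : Equiv.Perm ℝ) 0 ≤ sSup A' := le_csSup hA'bdd hmem
      have h2 : τ ρ ≤ F (sSup A') := by rw [← heval ρ]; exact hFmono h1
      linarith [hρ.1]
  set e := StrictMono.orderIsoOfSurjective F hFstrict hFsurj with he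
  refine ⟨e.toEquiv, ?_, ?_⟩
  · show StrictMono ⇑e.toEquiv
    exact hFstrict
  · intro ζ hζ
    refine ⟨τ ⟨ζ, hζ⟩, fun x => ?_⟩
    have h1 : F (e.toEquiv.symm x) = x := e.toEquiv.apply_symm_apply x
    calc e.toEquiv (ζ (e.toEquiv.symm x))
        = F (((⟨ζ, hζ⟩ : ↥Z) : Equiv.Perm ℝ) (e.toEquiv.symm x)) := rfl
      _ = F (e.toEquiv.symm x) + τ ⟨ζ, hζ⟩ := hequiv ⟨ζ, hζ⟩ _
      _ = x + τ ⟨ζ, hζ⟩ := by rw [h1]
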